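/- Suppose 0 ≤ z ≤ c₀ ν-a.e. on the support of Q and the marginal density ḡ(y) = ∫ g(y,z) ν(dz) satisfies ḡ ≤ c₁. Then there is a constant Γ₃ (depending only on c₀ and c₁) such that for all 0 ≤ a < b and all a ≤ t ≤ b, the L²(Q) norm of the deviation of h_t from the chord between h_a and h_b satisfies ‖h_t − ((t−a)h_b + (b−t)h_a)/(b−a)‖_{L²(Q)} ≤ Γ₃ (b−a). -/

import Mathlib

open Set MeasureTheory
open scoped ENNReal NNReal

/-- `h_t(y,z) = 2z(√y − √((y−t)₊))`. -/
noncomputable def hker (t y z : ℝ) : ℝ :=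
  2 * z * (Real.sqrt y - Real.sqrt (max (y - t) 0))

noncomputable def sq' (y t : ℝ) : ℝ := Real.sqrt (max (y - t) 0)

lemma sq'_mono {y s t : ℝ} (h : s ≤ t) : sq' y t ≤ sq' y s :=
  Real.sqrt_le_sqrt (max_le_max (by linarith) le_rfl)

lemma sq'_nonneg (y t : ℝ) : 0 ≤ sq' y t := Real.sqrt_nonneg _

lemma crude {a b t y : ℝ} (hat : a ≤ t) (htb : t ≤ b) (hab : a < b) :
    |((t-a) * sq' y b + (b-t) * sq' y a)/(b-a) - sq' y t| ≤ sq' y a - sq' y b := by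
  have h1 : sq' y b ≤ sq' y t := sq'_mono htb
  have h2 : sq' y t ≤ sq' y a := sq'_mono hat
  have hd : (0:ℝ) < b - a := by linarith
  have hL1 : sq' y b ≤ ((t-a) * sq' y b + (b-t) * sq' y a)/(b-a) := by
    rw [le_div_iff₀ hd]; nlinarith
  have hL2 : ((t-a) * sq' y b + (b-t) * sq' y a)/(b-a) ≤ sq' y a := by
    rw [div_le_iff₀ hd]; nlinarith
  rw [abs_le]; constructor <;> linarith

lemma fine_alg {A B T : ℝ} (hB : 0 < B) (hBT : B ≤ T) (hTA : T ≤ A) (hBA : B < A) :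
    |((A^2-T^2) * B + (T^2-B^2) * A)/(A^2-B^2) - T| ≤ (A^2-B^2)^2/4 * (1/B^3) := by
  have hABpos : 0 < A + B := by linarith
  have hne : A^2 - B^2 ≠ 0 := by nlinarith
  have key : ((A^2-T^2) * B + (T^2-B^2) * A)/(A^2-B^2) - T
      = -((A - T) * (T - B)) / (A + B) := by
    rw [div_sub' hne, div_eq_div_iff hne (by linarith : A + B ≠ 0)]
    ring
  rw [key, abs_div, abs_neg,
    abs_of_nonneg (by nlinarith : (0:ℝ) ≤ (A - T) * (T - B)), abs_of_pos hABpos,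
    div_le_iff₀ hABpos,
    show (A^2-B^2)^2/4 * (1/B^3) * (A+B) = (A^2-B^2)^2*(A+B)/(4*B^3) by ring,
    le_div_iff₀ (by positivity)]
  have h1 : (A-T)*(T-B) ≤ (A-B)^2 := by
    nlinarith [mul_nonneg (sub_nonneg.2 hTA) (sub_nonneg.2 hBT), sq_nonneg (A - 2*T + B)]
  have h2 : 4*B^3 ≤ (A+B)^3 := by
    have := pow_le_pow_left₀ (by positivity : (0:ℝ) ≤ 2*B) (by linarith : 2*B ≤ A+B) 3
    nlinarith [mul_pos (mul_pos hB hB) hB]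
  calc (A-T)*(T-B)*(4*B^3) ≤ (A-B)^2 * (A+B)^3 :=
        mul_le_mul h1 h2 (by positivity) (sq_nonneg _)
    _ = (A^2-B^2)^2*(A+B) := by ring

lemma fine {a b t y : ℝ} (hat : a ≤ t) (htb : t ≤ b) (hab : a < b) (hy : b < y) :
    |((t-a) * sq' y b + (b-t) * sq' y a)/(b-a) - sq' y t| ≤
      (b-a)^2/4 * (y - b) ^ (-(3:ℝ)/2) := by
  have hyb : (0:ℝ) < y - b := by linarith
  have hyt : (0:ℝ) < y - t := by linarith
  have hya : (0:ℝ) < y - a := by linarith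
  have hA2 : Real.sqrt (y-a)^2 = y - a := Real.sq_sqrt hya.le
  have hB2 : Real.sqrt (y-b)^2 = y - b := Real.sq_sqrt hyb.le
  have hT2 : Real.sqrt (y-t)^2 = y - t := Real.sq_sqrt hyt.le
  have hBpos : 0 < Real.sqrt (y-b) := Real.sqrt_pos.2 hyb
  have hsa : sq' y a = Real.sqrt (y-a) := by rw [sq', max_eq_left hya.le]
  have hsb : sq' y b = Real.sqrt (y-b) := by rw [sq', max_eq_left hyb.le]
  have hst : sq' y t = Real.sqrt (y-t) := by rw [sq', max_eq_left hyt.le]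
  have h32 : Real.sqrt (y-b) ^ 3 = (y - b) ^ ((3:ℝ)/2) := by
    rw [show (Real.sqrt (y-b))^3 = (Real.sqrt (y-b)) ^ ((3:ℕ):ℝ) from
      (Real.rpow_natCast _ 3).symm, Real.sqrt_eq_rpow, ← Real.rpow_mul hyb.le]
    norm_num
  have hrw : (y - b) ^ (-(3:ℝ)/2) = 1 / Real.sqrt (y-b)^3 := by
    rw [h32, one_div, show -(3:ℝ)/2 = -((3:ℝ)/2) by ring, Real.rpow_neg hyb.le]
  rw [hrw, hsa, hsb, hst,
    show t - a = Real.sqrt (y-a)^2 - Real.sqrt (y-t)^2 by rw [hA2, hT2]; ring,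
    show b - t = Real.sqrt (y-t)^2 - Real.sqrt (y-b)^2 by rw [hB2, hT2]; ring,
    show b - a = Real.sqrt (y-a)^2 - Real.sqrt (y-b)^2 by rw [hA2, hB2]; ring]
  exact fine_alg hBpos (Real.sqrt_le_sqrt (by linarith)) (Real.sqrt_le_sqrt (by linarith))
    (by rw [show Real.sqrt (y-b) < Real.sqrt (y-a) ↔ _ from Real.sqrt_lt_sqrt_iff hyb.le]; linarith)

noncomputable def phi (a b y : ℝ) : ℝ :=
  if y ≤ 2*b - a then sq' y a - sq' y b else (b-a)^2/4 * (y-b) ^ (-(3:ℝ)/2)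

lemma phi_nonneg {a b : ℝ} (hab : a < b) (y : ℝ) : 0 ≤ phi a b y := by
  unfold phi; split_ifs with h
  · exact sub_nonneg.2 (sq'_mono hab.le)
  · have : (0:ℝ) ≤ y - b := by linarith [not_le.1 h]
    positivity

lemma phi_measurable (a b : ℝ) : Measurable (phi a b) := by
  unfold phi sq'
  exact Measurable.ite (measurableSet_le measurable_id measurable_const)
    (by fun_prop) (by fun_prop)

lemma ptwise {a b t y z C : ℝ} (hat : a ≤ t) (htb : t ≤ b) (hab : a < b)
    (hz0 : 0 ≤ z) (hzC : z ≤ C) :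
    |hker t y z - ((t-a) * hker b y z + (b-t) * hker a y z)/(b-a)|
      ≤ 2*C*phi a b y := by
  have hd : (0:ℝ) < b - a := by linarith
  have key : hker t y z - ((t-a) * hker b y z + (b-t) * hker a y z)/(b-a)
      = 2*z*(((t-a) * sq' y b + (b-t) * sq' y a)/(b-a) - sq' y t) := by
    unfold hker sq'; field_simp; ring
  rw [key, abs_mul, abs_of_nonneg (by positivity : (0:ℝ) ≤ 2*z)]
  have hbound : |((t-a) * sq' y b + (b-t) * sq' y a)/(b-a) - sq' y t| ≤ phi a b y := by
    unfold phi; split_ifs with h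
    · exact crude hat htb hab
    · exact fine hat htb hab (by linarith [not_le.1 h])
  calc 2*z*|((t-a) * sq' y b + (b-t) * sq' y a)/(b-a) - sq' y t|
      ≤ 2*C*|((t-a) * sq' y b + (b-t) * sq' y a)/(b-a) - sq' y t| := by
        apply mul_le_mul_of_nonneg_right (by linarith) (abs_nonneg _)
    _ ≤ 2*C*phi a b y := by
        apply mul_le_mul_of_nonneg_left hbound (by linarith)

lemma phi_zero {a b y : ℝ} (hab : a < b) (hy : y ≤ a) : phi a b y = 0 := by
  unfold phi
  rw [if_pos (by linarith)]
  unfold sq'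
  rw [max_eq_right (by linarith), max_eq_right (by linarith), sub_self]

lemma phi_sq_mid {a b y : ℝ} (hab : a < b) (hy : y ≤ 2*b - a) :
    phi a b y ^ 2 ≤ 2*(b-a) := by
  have h0 : 0 ≤ phi a b y := phi_nonneg hab y
  unfold phi at *
  rw [if_pos hy] at *
  have h2 : sq' y a - sq' y b ≤ sq' y a := by linarith [sq'_nonneg y b]
  have h3 : sq' y a ^ 2 = max (y-a) 0 := Real.sq_sqrt (le_max_right _ _)
  calc (sq' y a - sq' y b)^2 ≤ sq' y a ^ 2 := pow_le_pow_left₀ h0 h2 2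
    _ = max (y-a) 0 := h3
    _ ≤ 2*(b-a) := max_le (by linarith) (by linarith)

lemma phi_sq_tail {a b y : ℝ} (hab : a < b) (hy : 2*b - a < y) :
    phi a b y ^ 2 = (b-a)^4/16 * (y-b) ^ (-(3:ℝ)) := by
  have hyb : (0:ℝ) < y - b := by linarith
  unfold phi
  rw [if_neg (not_le.2 hy), mul_pow, div_pow,
    ← Real.rpow_natCast ((y-b) ^ (-(3:ℝ)/2)) 2, ← Real.rpow_mul hyb.le]
  norm_num
  exact Or.inl (by ring)

lemma Jbound {a b : ℝ} (ha : 0 ≤ a) (hab : a < b) :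
    ∫⁻ y in Ici (0:ℝ), ENNReal.ofReal (phi a b y ^ 2)
      ≤ ENNReal.ofReal (5*(b-a)^2) := by
  have hδ0 : (0:ℝ) < b - a := by linarith
  have hsplit : Ioi a = Ioc a (2*b-a) ∪ Ioi (2*b-a) := (Ioc_union_Ioi_eq_Ioi (by linarith)).symm
  have piece1 : ∫⁻ y in Iic a, ENNReal.ofReal (phi a b y ^ 2) = 0 := by
    rw [setLIntegral_congr_fun measurableSet_Iic
      (fun y (hy : y ≤ a) => by rw [phi_zero hab hy])]
    simp
  have piece2 : ∫⁻ y in Ioc a (2*b-a), ENNReal.ofReal (phi a b y ^ 2)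
      ≤ ENNReal.ofReal (4*(b-a)^2) := by
    calc ∫⁻ y in Ioc a (2*b-a), ENNReal.ofReal (phi a b y ^ 2)
        ≤ ∫⁻ _ in Ioc a (2*b-a), ENNReal.ofReal (2*(b-a)) :=
          setLIntegral_mono measurable_const
            (fun y hy => ENNReal.ofReal_le_ofReal (phi_sq_mid hab hy.2))
      _ = ENNReal.ofReal (2*(b-a)) * volume (Ioc a (2*b-a)) := setLIntegral_const _ _
      _ ≤ ENNReal.ofReal (4*(b-a)^2) := by
          rw [Real.volume_Ioc, ← ENNReal.ofReal_mul (by positivity)]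
          exact ENNReal.ofReal_le_ofReal (by nlinarith)
  have piece3 : ∫⁻ y in Ioi (2*b-a), ENNReal.ofReal (phi a b y ^ 2)
      ≤ ENNReal.ofReal ((b-a)^2/32) := by
    rw [setLIntegral_congr_fun measurableSet_Ioi
      (fun y (hy : y ∈ Ioi (2*b-a)) => by rw [phi_sq_tail hab hy])]
    have hpre : ((· + b) : ℝ → ℝ) ⁻¹' (Ioi (2*b-a)) = Ioi (b-a) := by
      ext x; simp only [mem_preimage, mem_Ioi]; constructor <;> intro h <;> linarith
    have hshift := (measurePreserving_add_right volume b).setLIntegral_comp_preimage_emb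
      (Homeomorph.addRight b).measurableEmbedding
      (fun y => ENNReal.ofReal ((b-a)^4/16 * (y-b) ^ (-(3:ℝ)))) (Ioi (2*b-a))
    rw [hpre] at hshift
    rw [← hshift]
    simp only [add_sub_cancel_right]
    have hInt : IntegrableOn (fun x : ℝ => (b-a)^4/16 * x ^ (-(3:ℝ))) (Ioi (b-a)) :=
      (integrableOn_Ioi_rpow_of_lt (by norm_num) hδ0).const_mul _
    have hnn : 0 ≤ᵐ[volume.restrict (Ioi (b-a))] fun x : ℝ => (b-a)^4/16 * x ^ (-(3:ℝ)) := by
      filter_upwards [ae_restrict_mem measurableSet_Ioi] with x hx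
      have hx0 : (0:ℝ) < x := hδ0.trans hx
      positivity
    rw [← ofReal_integral_eq_lintegral_ofReal hInt hnn]
    · apply ENNReal.ofReal_le_ofReal
      rw [integral_const_mul, integral_Ioi_rpow_of_lt (by norm_num) hδ0]
      have h2 : (b-a) ^ ((-3:ℝ)+1) = ((b-a)^2)⁻¹ := by
        rw [show (-3:ℝ)+1 = -((2:ℕ):ℝ) by norm_num, Real.rpow_neg hδ0.le, Real.rpow_natCast]
      rw [h2]
      have : (b-a)^4/16 * (-((b-a)^2)⁻¹ / (-3+1)) = (b-a)^2/32 := by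
        field_simp
        ring
      linarith [this]
  calc ∫⁻ y in Ici (0:ℝ), ENNReal.ofReal (phi a b y ^ 2)
      ≤ ∫⁻ y, ENNReal.ofReal (phi a b y ^ 2) := setLIntegral_le_lintegral _ _
    _ = (∫⁻ y in Iic a, ENNReal.ofReal (phi a b y ^ 2))
        + ∫⁻ y in Ioi a, ENNReal.ofReal (phi a b y ^ 2) := by
        have h := lintegral_add_compl (fun y => ENNReal.ofReal (phi a b y ^ 2))
          (measurableSet_Iic (a := a)) (μ := volume)
        rw [compl_Iic] at h
        exact h.symm
    _ = (∫⁻ y in Ioc a (2*b-a), ENNReal.ofReal (phi a b y ^ 2))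
        + ∫⁻ y in Ioi (2*b-a), ENNReal.ofReal (phi a b y ^ 2) := by
        rw [piece1, zero_add, hsplit,
          lintegral_union measurableSet_Ioi (Ioc_disjoint_Ioi le_rfl)]
    _ ≤ ENNReal.ofReal (4*(b-a)^2) + ENNReal.ofReal ((b-a)^2/32) :=
        add_le_add piece2 piece3
    _ ≤ ENNReal.ofReal (5*(b-a)^2) := by
        rw [← ENNReal.ofReal_add (by positivity) (by positivity)]
        exact ENNReal.ofReal_le_ofReal (by nlinarith)


set_option maxHeartbeats 1000000 in
/-- Lemma 6.1, inequality (25): if `Q` has density `g` with respect to `λ × ν` on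
`[0,∞)²`, `0 ≤ z ≤ c₀` `Q`-a.e., and the marginal density `ḡ(y) = ∫ g(y,z) ν(dz)` is
bounded by `c₁`, then there is a constant `Γ₃` such that for all `0 ≤ a < b` and
`t ∈ [a,b]`, `‖h_t − ((t−a)h_b + (b−t)h_a)/(b−a)‖_{L²(Q)} ≤ Γ₃ (b−a)`. -/
theorem hker_L2_chord_bound
    (ν : Measure ℝ) [SigmaFinite ν] (hν : ν (Iio 0) = 0)
    (g : ℝ → ℝ → ℝ) (hg_meas : Measurable (Function.uncurry g))
    (hg_nonneg : ∀ y z, 0 ≤ g y z)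
    (Q : Measure (ℝ × ℝ)) [IsProbabilityMeasure Q]
    (hQ : Q = ((volume.restrict (Ici (0 : ℝ))).prod ν).withDensity
      (fun p => ENNReal.ofReal (g p.1 p.2)))
    (c₀ : ℝ) (hzbd : ∀ᵐ p ∂Q, 0 ≤ p.2 ∧ p.2 ≤ c₀)
    (c₁ : ℝ) (hmarg : ∀ y : ℝ, (∫⁻ z, ENNReal.ofReal (g y z) ∂ν) ≤ ENNReal.ofReal c₁) :
    ∃ Γ₃ : ℝ, 0 < Γ₃ ∧ ∀ a b t : ℝ, 0 ≤ a → a < b → t ∈ Icc a b →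
      eLpNorm (fun p : ℝ × ℝ =>
          hker t p.1 p.2 - ((t - a) * hker b p.1 p.2 + (b - t) * hker a p.1 p.2) / (b - a))
        2 Q ≤ ENNReal.ofReal (Γ₃ * (b - a)) := by
  set C₀ := max c₀ 1 with hC₀def
  set C₁ := max c₁ 1 with hC₁def
  have hC₀ : (0:ℝ) < C₀ := lt_of_lt_of_le one_pos (le_max_right _ _)
  have hC₁ : (0:ℝ) < C₁ := lt_of_lt_of_le one_pos (le_max_right _ _)
  have hsC₁ : (0:ℝ) < Real.sqrt C₁ := Real.sqrt_pos.2 hC₁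
  refine ⟨5 * C₀ * Real.sqrt C₁, by positivity, ?_⟩
  intro a b t ha hab ht
  obtain ⟨hat, htb⟩ := ht
  have hδ0 : (0:ℝ) < b - a := by linarith
  set μ := (volume.restrict (Ici (0:ℝ))).prod ν with hμ
  set w : ℝ×ℝ → ℝ≥0∞ := fun p => ENNReal.ofReal (g p.1 p.2) with hwdef
  have hw : Measurable w := ENNReal.measurable_ofReal.comp hg_meas
  set f : ℝ×ℝ → ℝ := fun p =>
    hker t p.1 p.2 - ((t-a) * hker b p.1 p.2 + (b-t) * hker a p.1 p.2)/(b-a) with hfdef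
  have hfm : Measurable f := by
    rw [hfdef]; unfold hker; fun_prop
  have hK : ∀ p : ℝ×ℝ, 0 ≤ p.2 → p.2 ≤ c₀ → |f p| ≤ 2*C₀*phi a b p.1 :=
    fun p h0 h1 => ptwise hat htb hab h0 (h1.trans (le_max_left _ _))
  set K : ℝ → ℝ≥0∞ := fun y => ENNReal.ofReal ((2*C₀*phi a b y)^2) with hKdef
  have hKm : Measurable K :=
    ENNReal.measurable_ofReal.comp ((measurable_const.mul (phi_measurable a b)).pow_const 2)
  have hmain : ∫⁻ p, (‖f p‖₊ : ℝ≥0∞) ^ (2:ℕ) ∂Q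
      ≤ ENNReal.ofReal ((5*C₀*Real.sqrt C₁*(b-a))^2) := by
    rw [hQ, lintegral_withDensity_eq_lintegral_mul _ hw ((hfm.nnnorm.coe_nnreal_ennreal).pow_const 2)]
    have hae : ∀ᵐ p ∂μ, w p ≠ 0 → (0 ≤ p.2 ∧ p.2 ≤ c₀) := by
      rw [← ae_withDensity_iff hw]
      rw [hQ] at hzbd
      exact hzbd
    have step1 : ∫⁻ p, (w * fun p => (‖f p‖₊ : ℝ≥0∞) ^ (2:ℕ)) p ∂μ
        ≤ ∫⁻ p, w p * K p.1 ∂μ := by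
      apply lintegral_mono_ae
      filter_upwards [hae] with p hp
      rcases eq_or_ne (w p) 0 with h0 | h0
      · simp [Pi.mul_apply, h0]
      · obtain ⟨hz0, hz1⟩ := hp h0
        simp only [Pi.mul_apply]
        apply mul_le_mul_right
        rw [show ((‖f p‖₊ : ℝ≥0∞)) = ENNReal.ofReal |f p| from Real.enorm_eq_ofReal_abs _,
          ← ENNReal.ofReal_pow (abs_nonneg _)]
        exact ENNReal.ofReal_le_ofReal (pow_le_pow_left₀ (abs_nonneg _) (hK p hz0 hz1) 2)
    refine le_trans step1 ?_
    have hprod : ∫⁻ p, w p * K p.1 ∂μ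
        = ∫⁻ y in Ici (0:ℝ), ∫⁻ z, w (y, z) * K y ∂ν :=
      lintegral_prod _ ((hw.mul (hKm.comp measurable_fst)).aemeasurable)
    rw [hprod]
    have inner : ∀ y : ℝ, ∫⁻ z, w (y, z) * K y ∂ν ≤ ENNReal.ofReal C₁ * K y := by
      intro y
      have hmz : Measurable fun z : ℝ => w (y, z) := hw.comp measurable_prodMk_left
      calc ∫⁻ z, w (y, z) * K y ∂ν = (∫⁻ z, w (y, z) ∂ν) * K y :=
            lintegral_mul_const _ hmz
        _ ≤ ENNReal.ofReal C₁ * K y := by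
            rw [mul_comm (ENNReal.ofReal C₁) (K y), mul_comm _ (K y)]
            exact mul_le_mul_right ((hmarg y).trans
              (ENNReal.ofReal_le_ofReal (le_max_left _ _))) _
    have hKsplit : ∀ y, K y = ENNReal.ofReal (4*C₀^2) * ENNReal.ofReal (phi a b y^2) := by
      intro y
      show ENNReal.ofReal ((2*C₀*phi a b y)^2) = _
      rw [← ENNReal.ofReal_mul (by positivity)]
      congr 1
      ring
    calc ∫⁻ y in Ici (0:ℝ), ∫⁻ z, w (y, z) * K y ∂ν
        ≤ ∫⁻ y in Ici (0:ℝ), ENNReal.ofReal C₁ * K y := lintegral_mono inner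
      _ = ENNReal.ofReal C₁ * ∫⁻ y in Ici (0:ℝ), K y := lintegral_const_mul _ hKm
      _ = ENNReal.ofReal C₁ * (ENNReal.ofReal (4*C₀^2)
            * ∫⁻ y in Ici (0:ℝ), ENNReal.ofReal (phi a b y^2)) := by
          simp_rw [hKsplit]
          have hphm : Measurable fun y : ℝ => ENNReal.ofReal (phi a b y ^ 2) :=
            ENNReal.measurable_ofReal.comp ((phi_measurable a b).pow_const 2)
          rw [lintegral_const_mul _ hphm]
      _ ≤ ENNReal.ofReal C₁ * (ENNReal.ofReal (4*C₀^2) * ENNReal.ofReal (5*(b-a)^2)) :=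
          mul_le_mul_right (mul_le_mul_right (Jbound ha hab) _) _
      _ ≤ ENNReal.ofReal ((5*C₀*Real.sqrt C₁*(b-a))^2) := by
          rw [← ENNReal.ofReal_mul (by positivity), ← ENNReal.ofReal_mul hC₁.le]
          apply ENNReal.ofReal_le_ofReal
          have hs : Real.sqrt C₁ ^ 2 = C₁ := Real.sq_sqrt hC₁.le
          have hpos : (0:ℝ) ≤ C₀^2 * C₁ * (b-a)^2 := by positivity
          calc C₁ * (4*C₀^2 * (5*(b-a)^2)) = 20*(C₀^2 * C₁ * (b-a)^2) := by ring
            _ ≤ 25*(C₀^2 * C₁ * (b-a)^2) := by linarith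
            _ = (5*C₀*Real.sqrt C₁*(b-a))^2 := by
                rw [mul_pow, mul_pow, mul_pow, hs]; ring
  rw [eLpNorm_eq_lintegral_rpow_enorm_toReal (by norm_num) (by norm_num)]
  have hexp : ∀ x : ℝ≥0∞, x ^ ((2:ℝ≥0∞).toReal) = x ^ (2:ℕ) := fun x => by
    rw [← ENNReal.rpow_natCast x 2]
    norm_num
  simp_rw [hexp]
  have h12 : 1/(2:ℝ≥0∞).toReal = (1/2 : ℝ) := by norm_num
  rw [h12]
  calc (∫⁻ p, (‖f p‖₊ : ℝ≥0∞) ^ (2:ℕ) ∂Q) ^ (1/2 : ℝ)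
      ≤ (ENNReal.ofReal ((5*C₀*Real.sqrt C₁*(b-a))^2)) ^ (1/2 : ℝ) :=
        ENNReal.rpow_le_rpow hmain (by norm_num)
    _ = ENNReal.ofReal (5*C₀*Real.sqrt C₁*(b-a)) := by
        rw [ENNReal.ofReal_pow (by positivity), ← ENNReal.rpow_natCast
          (ENNReal.ofReal (5*C₀*Real.sqrt C₁*(b-a))) 2, ← ENNReal.rpow_mul]
        norm_num
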